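/- (Conservation of the canonical one-form along extremals.) Let v : ℝ³ × ℝ → ℝ³ be continuously differentiable in the spatial variable. Let φ : ℝ³ × ℝ → ℝ³ be twice continuously differentiable and π : ℝ³ × ℝ → ℝ³ be differentiable, satisfying the extremal equations ∂φ/∂t(X,t) = v(φ(X,t), t) and ∂π/∂t(X,t) = −(Dv(φ(X,t), t))ᵀ π(X,t) for all (X,t). Then for every X ∈ ℝ³, the map t ↦ (D_X φ(X,t))ᵀ π(X,t) is constant; i.e. ∂/∂t [ Σᵢ πᵢ(X,t) dφᵢ(X,t) ] = 0. -/

import Mathlib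

open Matrix

/-- The Jacobian matrix of a vector field `u : ℝ³ → ℝ³` at `x`:
`(jacAt u x) i j = ∂uᵢ/∂xⱼ (x)`. -/
noncomputable def jacAt (u : (Fin 3 → ℝ) → (Fin 3 → ℝ)) (x : Fin 3 → ℝ) :
    Matrix (Fin 3) (Fin 3) ℝ :=
  fun i j => fderiv ℝ u x (Pi.single j 1) i

/-- The gradient of a scalar function `f : ℝ³ → ℝ` at `x`. -/
noncomputable def gradAt (f : (Fin 3 → ℝ) → ℝ) (x : Fin 3 → ℝ) : Fin 3 → ℝ :=
  fun i => fderiv ℝ f x (Pi.single i 1)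

/-- The curl of a vector field `u : ℝ³ → ℝ³` at `x`. -/
noncomputable def curlAt (u : (Fin 3 → ℝ) → (Fin 3 → ℝ)) (x : Fin 3 → ℝ) : Fin 3 → ℝ :=
  ![jacAt u x 2 1 - jacAt u x 1 2,
    jacAt u x 0 2 - jacAt u x 2 0,
    jacAt u x 1 0 - jacAt u x 0 1]

/-- The divergence of a vector field `u : ℝ³ → ℝ³` at `x`. -/
noncomputable def divAt (u : (Fin 3 → ℝ) → (Fin 3 → ℝ)) (x : Fin 3 → ℝ) : ℝ :=
  ∑ i, jacAt u x i i

/-- Conservation of the canonical one-form `Σᵢ πᵢ dφᵢ` along extremals of the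
optimal control problem: if `∂φ/∂t = v ∘ φ` and `∂π/∂t = −(Dv ∘ φ)ᵀ π`, then
`t ↦ (D_X φ)ᵀ π` is constant for each `X`. -/
theorem canonical_one_form_conserved
    (v : (Fin 3 → ℝ) × ℝ → (Fin 3 → ℝ))
    (hv : ∀ t : ℝ, ContDiff ℝ 1 (fun x => v (x, t)))
    (φ π : (Fin 3 → ℝ) × ℝ → (Fin 3 → ℝ))
    (hφ : ContDiff ℝ 2 φ) (hπ : Differentiable ℝ π)
    (hφeq : ∀ (X : Fin 3 → ℝ) (t : ℝ),
      deriv (fun s => φ (X, s)) t = v (φ (X, t), t))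
    (hπeq : ∀ (X : Fin 3 → ℝ) (t : ℝ),
      deriv (fun s => π (X, s)) t
        = -((jacAt (fun y => v (y, t)) (φ (X, t)))ᵀ *ᵥ π (X, t))) :
    ∀ (X : Fin 3 → ℝ) (t₁ t₂ : ℝ),
      (jacAt (fun Y => φ (Y, t₁)) X)ᵀ *ᵥ π (X, t₁)
        = (jacAt (fun Y => φ (Y, t₂)) X)ᵀ *ᵥ π (X, t₂) := by
  intro X t₁ t₂
  have hφd : Differentiable ℝ φ := hφ.differentiable two_ne_zero
  have hΦc : ContDiff ℝ 1 (fderiv ℝ φ) := hφ.fderiv_right (by norm_num)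
  have hΦd : Differentiable ℝ (fderiv ℝ φ) := hΦc.differentiable one_ne_zero
  have hinc : ∀ t : ℝ, HasFDerivAt (fun Y : Fin 3 → ℝ => (Y, t))
      (ContinuousLinearMap.inl ℝ (Fin 3 → ℝ) ℝ) X := fun t => hasFDerivAt_prodMk_left X t
  have hincT : ∀ t : ℝ, HasDerivAt (fun s : ℝ => ((X, s) : (Fin 3 → ℝ) × ℝ))
      ((0 : Fin 3 → ℝ), (1 : ℝ)) t :=
    fun t => (hasDerivAt_const t X).prodMk (hasDerivAt_id t)
  have hA : ∀ t, HasFDerivAt (fun Y => φ (Y, t))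
      ((fderiv ℝ φ (X, t)).comp (ContinuousLinearMap.inl ℝ (Fin 3 → ℝ) ℝ)) X :=
    fun t => ((hφd (X, t)).hasFDerivAt).comp X (hinc t)
  have vkey : ∀ (Y : Fin 3 → ℝ) (t : ℝ),
      v (φ (Y, t), t) = fderiv ℝ φ (Y, t) ((0 : Fin 3 → ℝ), (1 : ℝ)) := by
    intro Y t
    have hT : HasDerivAt (fun s => φ (Y, s)) (fderiv ℝ φ (Y, t) ((0 : Fin 3 → ℝ), (1 : ℝ))) t :=
      ((hφd (Y, t)).hasFDerivAt).comp_hasDerivAt t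
        ((hasDerivAt_const t Y).prodMk (hasDerivAt_id t))
    rw [← hφeq Y t, hT.deriv]
  have hπX : ∀ t : ℝ, HasDerivAt (fun s => π (X, s))
      (-((jacAt (fun y => v (y, t)) (φ (X, t)))ᵀ *ᵥ π (X, t))) t := by
    intro t
    have hd : DifferentiableAt ℝ (fun s : ℝ => π (X, s)) t :=
      (hπ (X, t)).comp t ((differentiableAt_const X).prodMk differentiableAt_id)
    exact hπeq X t ▸ hd.hasDerivAt
  -- key time-derivative of the spatial Jacobian column
  have key : ∀ (t : ℝ) (e : Fin 3 → ℝ), HasDerivAt (fun s => fderiv ℝ φ (X, s) (e, 0))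
      (fderiv ℝ (fun x => v (x, t)) (φ (X, t)) (fderiv ℝ φ (X, t) (e, 0))) t := by
    intro t e
    have hΦp : HasFDerivAt (fderiv ℝ φ) (fderiv ℝ (fderiv ℝ φ) (X, t)) (X, t) :=
      (hΦd (X, t)).hasFDerivAt
    have hsym := second_derivative_symmetric (fun y => (hφd y).hasFDerivAt) hΦp
    have h1 : HasDerivAt (fun s => fderiv ℝ φ (X, s))
        (fderiv ℝ (fderiv ℝ φ) (X, t) ((0 : Fin 3 → ℝ), (1 : ℝ))) t :=
      hΦp.comp_hasDerivAt t (hincT t)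
    have h2 : HasDerivAt (fun s => fderiv ℝ φ (X, s) (e, 0))
        (fderiv ℝ (fderiv ℝ φ) (X, t) ((0 : Fin 3 → ℝ), (1 : ℝ)) (e, 0)) t := by
      simpa using h1.clm_apply (hasDerivAt_const t ((e, 0) : (Fin 3 → ℝ) × ℝ))
    have h3 : fderiv ℝ (fderiv ℝ φ) (X, t) ((0 : Fin 3 → ℝ), (1 : ℝ)) (e, 0)
        = fderiv ℝ (fun x => v (x, t)) (φ (X, t)) (fderiv ℝ φ (X, t) (e, 0)) := by
      rw [hsym]
      -- differentiate Y ↦ fderiv φ (Y,t) (0,1) = Y ↦ v (φ (Y,t), t) at X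
      have hB : HasFDerivAt (fun Y => fderiv ℝ φ (Y, t))
          ((fderiv ℝ (fderiv ℝ φ) (X, t)).comp (ContinuousLinearMap.inl ℝ (Fin 3 → ℝ) ℝ)) X :=
        hΦp.comp X (hinc t)
      have hBapp := hB.clm_apply
        (hasFDerivAt_const (((0 : Fin 3 → ℝ), (1 : ℝ)) : (Fin 3 → ℝ) × ℝ) X)
      have hv' : HasFDerivAt (fun x => v (x, t))
          (fderiv ℝ (fun x => v (x, t)) (φ (X, t))) (φ (X, t)) :=
        (((hv t).differentiable one_ne_zero) (φ (X, t))).hasFDerivAt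
      have hV : HasFDerivAt (fun Y => v (φ (Y, t), t))
          ((fderiv ℝ (fun x => v (x, t)) (φ (X, t))).comp
            ((fderiv ℝ φ (X, t)).comp (ContinuousLinearMap.inl ℝ (Fin 3 → ℝ) ℝ))) X :=
        by have := hv'.comp X (hA t); exact this
      have heqfun : (fun Y => fderiv ℝ φ (Y, t) ((0 : Fin 3 → ℝ), (1 : ℝ)))
          = fun Y => v (φ (Y, t), t) := funext fun Y => (vkey Y t).symm
      rw [heqfun] at hBapp
      have huniq := hBapp.unique hV
      have := congrArg (fun L : (Fin 3 → ℝ) →L[ℝ] (Fin 3 → ℝ) => L e) huniq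
      simpa using this
    exact h3 ▸ h2
  -- linearity: L w i = ∑ k, w k * L (single k 1) i
  have clm_sum : ∀ (L : (Fin 3 → ℝ) →L[ℝ] (Fin 3 → ℝ)) (w : Fin 3 → ℝ) (i : Fin 3),
      L w i = ∑ k, w k * L (Pi.single k 1) i := by
    intro L w i
    have hw : w = ∑ k, Pi.single k (w k) := (Finset.univ_sum_single w).symm
    conv_lhs => rw [hw]
    rw [map_sum, Finset.sum_apply]
    refine Finset.sum_congr rfl fun k _ => ?_
    have hs : (Pi.single k (w k) : Fin 3 → ℝ) = w k • (Pi.single k 1 : Fin 3 → ℝ) := by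
      funext m
      simp [Pi.single_apply, mul_ite]
    rw [hs, L.map_smul]
    simp [smul_eq_mul]
  -- the conserved scalar, componentwise
  have main : ∀ j : Fin 3,
      (∑ i, fderiv ℝ φ (X, t₁) (Pi.single j 1, 0) i * π (X, t₁) i)
        = ∑ i, fderiv ℝ φ (X, t₂) (Pi.single j 1, 0) i * π (X, t₂) i := by
    intro j
    set G : ℝ → ℝ := fun s => ∑ i, fderiv ℝ φ (X, s) (Pi.single j 1, 0) i * π (X, s) i with hGdef
    have hG : ∀ t, HasDerivAt G 0 t := by
      intro t
      set Dv := fderiv ℝ (fun x => v (x, t)) (φ (X, t)) with hDv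
      set g : Fin 3 → ℝ := fderiv ℝ φ (X, t) (Pi.single j 1, 0) with hg
      have hcomp : ∀ i, HasDerivAt (fun s => fderiv ℝ φ (X, s) (Pi.single j 1, 0) i)
          (Dv g i) t := fun i => (hasDerivAt_pi.1 (key t (Pi.single j 1))) i
      have hπi : ∀ i, HasDerivAt (fun s => π (X, s) i)
          ((-((jacAt (fun y => v (y, t)) (φ (X, t)))ᵀ *ᵥ π (X, t))) i) t :=
        fun i => (hasDerivAt_pi.1 (hπX t)) i
      have hsum : HasDerivAt G
          (∑ i, (Dv g i * π (X, t) i +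
            g i * (-((jacAt (fun y => v (y, t)) (φ (X, t)))ᵀ *ᵥ π (X, t))) i)) t :=
        HasDerivAt.fun_sum fun i _ => (hcomp i).mul (hπi i)
      have hz : (∑ i, (Dv g i * π (X, t) i +
          g i * (-((jacAt (fun y => v (y, t)) (φ (X, t)))ᵀ *ᵥ π (X, t))) i)) = 0 := by
        have hDvi : ∀ i, Dv g i = ∑ k, g k * Dv (Pi.single k 1) i := fun i => by
          rw [clm_sum Dv g i]
        simp only [hDvi, Pi.neg_apply, Matrix.mulVec, dotProduct,
          Matrix.transpose_apply, jacAt, ← hDv]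
        rw [Finset.sum_add_distrib]
        have hswap : ∑ x, (∑ k, g k * Dv (Pi.single k 1) x) * π (X, t) x
            = ∑ x, g x * ∑ k, Dv (Pi.single x 1) k * π (X, t) k := by
          have h1 : ∀ x, (∑ k, g k * Dv (Pi.single k 1) x) * π (X, t) x
              = ∑ k, g k * (Dv (Pi.single k 1) x * π (X, t) x) := by
            intro x
            rw [Finset.sum_mul]
            simp [mul_assoc]
          rw [Finset.sum_congr rfl fun x _ => h1 x, Finset.sum_comm]
          exact Finset.sum_congr rfl fun k _ => by rw [← Finset.mul_sum]
        rw [hswap, ← Finset.sum_add_distrib]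
        simp [mul_neg]
      exact hz ▸ hsum
    exact is_const_of_deriv_eq_zero (fun t => (hG t).differentiableAt)
      (fun t => (hG t).deriv) t₁ t₂
  funext j
  have hjac : ∀ t i, jacAt (fun Y => φ (Y, t)) X i j
      = fderiv ℝ φ (X, t) (Pi.single j 1, 0) i := by
    intro t i
    simp [jacAt, (hA t).fderiv]
  simp only [Matrix.mulVec, dotProduct, Matrix.transpose_apply, hjac]
  exact main j
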